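/- For every p ∈ (1/2, 1) there exists q(p) < 1 such that for every n ≥ 1 and every λ ∈ ℝ^n with ∑_{j=1}^n λ_j² = 1, one has 𝔼| ∑_{j=1}^n λ_j ξ_j | ≤ q(p), where ξ_1, …, ξ_n are the i.i.d. random variables associated with p. That is, the deficit in the Khinchine-type L¹–L² comparison is uniform in the dimension n and in the unit vector λ. -/

import Mathlib

/-- The value of the random variable `ξ_j` associated with `p`: it takes the value
`√((1−p)/p)` (encoded by `true`) and `−√(p/(1−p))` (encoded by `false`). -/
noncomputable def xiVal (p : ℝ) (b : Bool) : ℝ :=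
  if b then Real.sqrt ((1 - p) / p) else -Real.sqrt (p / (1 - p))

/-- The probability weight: `true` (the value `√((1−p)/p)`) has probability `p`,
`false` (the value `−√(p/(1−p))`) has probability `1 − p`. -/
def wt (p : ℝ) (b : Bool) : ℝ := if b then p else 1 - p

/-- `𝔼|∑_{j=1}^n λ_j ξ_j|` for i.i.d. `ξ_1, …, ξ_n` associated with `p`, written as the
explicit expectation over the product space `Bool^n`. -/
noncomputable def expAbsSum (p : ℝ) (n : ℕ) (l : Fin n → ℝ) : ℝ :=
  ∑ σ : Fin n → Bool, (∏ j, wt p (σ j)) * |∑ j, l j * xiVal p (σ j)|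

namespace KD

variable {p : ℝ} {n : ℕ}

/-- expectation over Bool^n -/
noncomputable def Ex (p : ℝ) (n : ℕ) (f : (Fin n → Bool) → ℝ) : ℝ :=
  ∑ σ : Fin n → Bool, (∏ j, wt p (σ j)) * f σ

lemma wt_nonneg (h0 : 0 < p) (h1 : p < 1) (b : Bool) : 0 ≤ wt p b := by
  cases b <;> simp [wt] <;> linarith

lemma w_nonneg (h0 : 0 < p) (h1 : p < 1) (σ : Fin n → Bool) :
    0 ≤ ∏ j, wt p (σ j) :=
  Finset.prod_nonneg fun j _ => wt_nonneg h0 h1 _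

lemma sum_w (h0 : 0 < p) (h1 : p < 1) :
    ∑ σ : Fin n → Bool, (∏ j, wt p (σ j)) = 1 := by
  have := Finset.prod_univ_sum (fun _ : Fin n => (Finset.univ : Finset Bool))
    (fun _ b => wt p b)
  rw [Fintype.piFinset_univ] at this
  rw [← this]
  norm_num [wt]

lemma Ex_const (h0 : 0 < p) (h1 : p < 1) (c : ℝ) :
    Ex p n (fun _ => c) = c := by
  unfold Ex
  rw [← Finset.sum_mul, sum_w h0 h1, one_mul]

lemma Ex_add (f g : (Fin n → Bool) → ℝ) :
    Ex p n (fun σ => f σ + g σ) = Ex p n f + Ex p n g := by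
  unfold Ex; rw [← Finset.sum_add_distrib]; congr 1; funext σ; ring

lemma Ex_cmul (c : ℝ) (f : (Fin n → Bool) → ℝ) :
    Ex p n (fun σ => c * f σ) = c * Ex p n f := by
  unfold Ex; rw [Finset.mul_sum]; congr 1; funext σ; ring

lemma Ex_mono (h0 : 0 < p) (h1 : p < 1) {f g : (Fin n → Bool) → ℝ}
    (h : ∀ σ, f σ ≤ g σ) : Ex p n f ≤ Ex p n g :=
  Finset.sum_le_sum fun σ _ => mul_le_mul_of_nonneg_left (h σ) (w_nonneg h0 h1 σ)

lemma Ex_nonneg (h0 : 0 < p) (h1 : p < 1) {f : (Fin n → Bool) → ℝ}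
    (h : ∀ σ, 0 ≤ f σ) : 0 ≤ Ex p n f := by
  have := Ex_mono h0 h1 (f := fun _ => 0) (g := f) h
  rwa [Ex_const h0 h1] at this

lemma abs_Ex_le (h0 : 0 < p) (h1 : p < 1) (f : (Fin n → Bool) → ℝ) :
    |Ex p n f| ≤ Ex p n (fun σ => |f σ|) := by
  refine (Finset.abs_sum_le_sum_abs _ _).trans ?_
  apply Finset.sum_le_sum
  intro σ _
  rw [abs_mul, abs_of_nonneg (w_nonneg h0 h1 σ)]

/-- Cauchy–Schwarz for Ex -/
lemma Ex_CS (h0 : 0 < p) (h1 : p < 1) (f g : (Fin n → Bool) → ℝ) :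
    (Ex p n (fun σ => f σ * g σ)) ^ 2 ≤
      Ex p n (fun σ => f σ ^ 2) * Ex p n (fun σ => g σ ^ 2) := by
  have key := Finset.sum_mul_sq_le_sq_mul_sq Finset.univ
    (fun σ : Fin n → Bool => Real.sqrt (∏ j, wt p (σ j)) * f σ)
    (fun σ : Fin n → Bool => Real.sqrt (∏ j, wt p (σ j)) * g σ)
  have hw : ∀ σ : Fin n → Bool,
      Real.sqrt (∏ j, wt p (σ j)) * Real.sqrt (∏ j, wt p (σ j)) = ∏ j, wt p (σ j) :=
    fun σ => Real.mul_self_sqrt (w_nonneg h0 h1 σ)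
  unfold Ex
  calc (∑ σ : Fin n → Bool, (∏ j, wt p (σ j)) * (f σ * g σ)) ^ 2
      = (∑ σ : Fin n → Bool, (Real.sqrt (∏ j, wt p (σ j)) * f σ) *
          (Real.sqrt (∏ j, wt p (σ j)) * g σ)) ^ 2 := by
        congr 2; funext σ; linear_combination (f σ * g σ) * (hw σ).symm
    _ ≤ _ := key.trans_eq (by
        congr 1
        · congr 1; funext σ; linear_combination (f σ ^ 2) * (hw σ)
        · congr 1; funext σ; linear_combination (g σ ^ 2) * (hw σ))



lemma Ex_split (k : Fin n) (g : Bool → ℝ) (F : (Fin n → Bool) → ℝ)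
    (hF : ∀ σ b, F (Function.update σ k b) = F σ) :
    Ex p n (fun σ => g (σ k) * F σ) =
      (wt p true * g true + wt p false * g false) * Ex p n F := by
  classical
  set T : (Fin n → Bool) → (Fin n → Bool) := fun σ => Function.update σ k (!(σ k)) with hT
  have hTk : ∀ σ, T σ k = !(σ k) := by intro σ; simp [hT]
  have hTT : Function.Involutive T := by
    intro σ
    simp only [hT, Function.update_self, Function.update_idem, Bool.not_not,
      Function.update_eq_self]
  have hsum : ∀ f : (Fin n → Bool) → ℝ, ∑ σ : Fin n → Bool, f (T σ) = ∑ σ : Fin n → Bool, f σ :=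
    fun f => Fintype.sum_bijective T hTT.bijective _ f (fun σ => rfl)
  have hWu : ∀ (σ : Fin n → Bool) (b : Bool),
      (∏ j, wt p (Function.update σ k b j)) =
        wt p b * ∏ j ∈ Finset.univ.erase k, wt p (σ j) := by
    intro σ b
    have h2 := Finset.prod_update_of_mem (Finset.mem_univ k) (fun j => wt p (σ j)) (wt p b)
    rw [← Finset.erase_eq] at h2
    rw [← h2]
    apply Finset.prod_congr rfl
    intro j _
    rcases eq_or_ne j k with rfl | h
    · simp
    · simp [Function.update_of_ne h]
  have hWe : ∀ σ : Fin n → Bool,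
      (∏ j, wt p (σ j)) = wt p (σ k) * ∏ j ∈ Finset.univ.erase k, wt p (σ j) :=
    fun σ => (Finset.mul_prod_erase _ _ (Finset.mem_univ k)).symm
  have claim : ∀ g' : Bool → ℝ,
      2 * (∑ σ : Fin n → Bool, (∏ j, wt p (σ j)) * (g' (σ k) * F σ)) =
      (wt p true * g' true + wt p false * g' false) *
        ∑ σ : Fin n → Bool, (∏ j ∈ Finset.univ.erase k, wt p (σ j)) * F σ := by
    intro g'
    have reidx : (∑ σ : Fin n → Bool, (∏ j, wt p (σ j)) * (g' (σ k) * F σ)) =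
        ∑ σ : Fin n → Bool, (∏ j, wt p (T σ j)) * (g' (!(σ k)) * F σ) := by
      rw [← hsum (fun σ => (∏ j, wt p (σ j)) * (g' (σ k) * F σ))]
      apply Finset.sum_congr rfl
      intro σ _
      have h1 : (T σ) k = !(σ k) := hTk σ
      have h2 : F (T σ) = F σ := hF σ _
      rw [h1, h2]
    rw [two_mul]
    nth_rewrite 2 [reidx]
    rw [← Finset.sum_add_distrib, Finset.mul_sum]
    apply Finset.sum_congr rfl
    intro σ _
    have h3 : (∏ j, wt p (T σ j)) =
        wt p (!(σ k)) * ∏ j ∈ Finset.univ.erase k, wt p (σ j) := hWu σ _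
    rw [h3, hWe σ]
    cases hb : σ k <;> simp [hb] <;> ring
  have c1 := claim g
  have c2 := claim (fun _ => 1)
  have hw1 : wt p true * 1 + wt p false * 1 = 1 := by simp [wt]
  rw [hw1] at c2
  simp only [mul_one, one_mul] at c2
  unfold Ex
  rw [← c2] at c1
  linarith [c1]

/-- partial weighted sum of the ξ's -/
noncomputable def Ssum (p : ℝ) (n : ℕ) (l : Fin n → ℝ) (A : Finset (Fin n))
    (σ : Fin n → Bool) : ℝ :=
  ∑ j ∈ A, l j * xiVal p (σ j)

/-- moments of a single ξ -/
noncomputable def Mo (p : ℝ) (i : ℕ) : ℝ :=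
  p * (xiVal p true) ^ i + (1 - p) * (xiVal p false) ^ i

variable {l : Fin n → ℝ}

lemma Ssum_update {A : Finset (Fin n)} {k : Fin n} (hk : k ∉ A)
    (σ : Fin n → Bool) (b : Bool) :
    Ssum p n l A (Function.update σ k b) = Ssum p n l A σ := by
  unfold Ssum
  apply Finset.sum_congr rfl
  intro j hj
  have : j ≠ k := fun h => hk (h ▸ hj)
  rw [Function.update_of_ne this]

lemma Ex_xi_pow_mul {A : Finset (Fin n)} {k : Fin n} (hk : k ∉ A) (i m : ℕ) :
    Ex p n (fun σ => (xiVal p (σ k)) ^ i * (Ssum p n l A σ) ^ m) =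
      Mo p i * Ex p n (fun σ => (Ssum p n l A σ) ^ m) := by
  have := Ex_split (p := p) k (fun b => (xiVal p b) ^ i) (fun σ => (Ssum p n l A σ) ^ m)
    (fun σ b => by
      show Ssum p n l A (Function.update σ k b) ^ m = Ssum p n l A σ ^ m
      rw [Ssum_update hk])
  rw [this]
  congr 1

lemma Ex_pow_zero (h0 : 0 < p) (h1 : p < 1) (f : (Fin n → Bool) → ℝ) :
    Ex p n (fun σ => f σ ^ 0) = 1 := by
  simp only [pow_zero]
  exact Ex_const h0 h1 1

section Moments
variable (h0 : 0 < p) (h1 : p < 1)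
include h0 h1

lemma sqrtA_sq : Real.sqrt ((1 - p) / p) ^ 2 = (1 - p) / p :=
  Real.sq_sqrt (div_nonneg (by linarith) h0.le)

lemma sqrtB_sq : Real.sqrt (p / (1 - p)) ^ 2 = p / (1 - p) :=
  Real.sq_sqrt (div_nonneg h0.le (by linarith))

lemma hpa : p * Real.sqrt ((1 - p) / p) = Real.sqrt (p * (1 - p)) := by
  have h : p ^ 2 * ((1 - p) / p) = p * (1 - p) := by field_simp
  calc p * Real.sqrt ((1 - p) / p)
      = Real.sqrt (p ^ 2) * Real.sqrt ((1 - p) / p) := by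
        rw [Real.sqrt_sq h0.le]
    _ = Real.sqrt (p ^ 2 * ((1 - p) / p)) := (Real.sqrt_mul (sq_nonneg p) _).symm
    _ = Real.sqrt (p * (1 - p)) := by rw [h]

lemma h1pb : (1 - p) * Real.sqrt (p / (1 - p)) = Real.sqrt (p * (1 - p)) := by
  have h1p : (0:ℝ) < 1 - p := by linarith
  have h : (1 - p) ^ 2 * (p / (1 - p)) = p * (1 - p) := by field_simp
  calc (1 - p) * Real.sqrt (p / (1 - p))
      = Real.sqrt ((1 - p) ^ 2) * Real.sqrt (p / (1 - p)) := by
        rw [Real.sqrt_sq h1p.le]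
    _ = Real.sqrt ((1 - p) ^ 2 * (p / (1 - p))) := (Real.sqrt_mul (sq_nonneg _) _).symm
    _ = Real.sqrt (p * (1 - p)) := by rw [h]

lemma Mo_zero : Mo p 0 = 1 := by norm_num [Mo]

lemma Mo_one : Mo p 1 = 0 := by
  have e1 := hpa h0 h1
  have e2 := h1pb h0 h1
  simp only [Mo, xiVal, if_true, Bool.false_eq_true, if_false, pow_one]
  linarith

lemma Mo_two : Mo p 2 = 1 := by
  have h1p : (0:ℝ) < 1 - p := by linarith
  have e1 := sqrtA_sq h0 h1
  have e2 := sqrtB_sq h0 h1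
  simp only [Mo, xiVal, if_true, Bool.false_eq_true, if_false]
  rw [show (-Real.sqrt (p / (1 - p))) ^ 2 = Real.sqrt (p / (1 - p)) ^ 2 by ring,
    e1, e2]
  field_simp
  ring

lemma Mo_four_eq : Mo p 4 = (1 - p) ^ 2 / p + p ^ 2 / (1 - p) := by
  have h1p : (0:ℝ) < 1 - p := by linarith
  have e1 := sqrtA_sq h0 h1
  have e2 := sqrtB_sq h0 h1
  simp only [Mo, xiVal, if_true, Bool.false_eq_true, if_false]
  rw [show (-Real.sqrt (p / (1 - p))) ^ 4 = (Real.sqrt (p / (1 - p)) ^ 2) ^ 2 by ring,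
    show (Real.sqrt ((1 - p) / p)) ^ 4 = (Real.sqrt ((1 - p) / p) ^ 2) ^ 2 by ring,
    e1, e2]
  field_simp

lemma Mo_four_ge_one : 1 ≤ Mo p 4 := by
  have h1p : (0:ℝ) < 1 - p := by linarith
  rw [Mo_four_eq h0 h1]
  rw [div_add_div _ _ (ne_of_gt h0) (ne_of_gt h1p), le_div_iff₀ (by positivity)]
  nlinarith [sq_nonneg (1 - 2 * p)]

lemma Mo_four_nonneg : 0 ≤ Mo p 4 := le_trans zero_le_one (Mo_four_ge_one h0 h1)

lemma Mo_six_nonneg : 0 ≤ Mo p 6 := by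
  have h6 : ∀ x : ℝ, 0 ≤ x ^ 6 := fun x => by positivity
  exact add_nonneg (mul_nonneg h0.le (h6 _)) (mul_nonneg (by linarith) (h6 _))

end Moments

/-- combined moment constant -/
noncomputable def Cp (p : ℝ) : ℝ := 8 + 20 * |Mo p 3| + 15 * Mo p 4 + Mo p 6

lemma Cp_nonneg (h0 : 0 < p) (h1 : p < 1) : 0 ≤ Cp p := by
  have := Mo_four_nonneg h0 h1
  have := Mo_six_nonneg h0 h1
  have := abs_nonneg (Mo p 3)
  unfold Cp; linarith

lemma Ex_affine (h0 : 0 < p) (h1 : p < 1) (c d : ℝ) (f : (Fin n → Bool) → ℝ) :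
    Ex p n (fun σ => c + d * f σ) = c + d * Ex p n f := by
  rw [Ex_add, Ex_cmul, Ex_const h0 h1]

lemma ExS_zero (h0 : 0 < p) (h1 : p < 1) (A : Finset (Fin n)) :
    Ex p n (fun σ => Ssum p n l A σ) = 0 := by
  classical
  induction A using Finset.induction_on with
  | empty =>
    have h : (fun σ : Fin n → Bool => Ssum p n l ∅ σ) = fun _ => (0:ℝ) := by
      funext σ; simp [Ssum]
    rw [h, Ex_const h0 h1]
  | @insert k A hk ih =>
    have hfe : (fun σ => Ssum p n l (insert k A) σ) =
        fun σ => l k * (xiVal p (σ k) ^ 1 * Ssum p n l A σ ^ 0) + Ssum p n l A σ := by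
      funext σ; simp only [Ssum, Finset.sum_insert hk]; ring
    rw [hfe, Ex_add, Ex_cmul, Ex_xi_pow_mul hk 1 0, Mo_one h0 h1, ih]
    ring

lemma ExS_one_pow (h0 : 0 < p) (h1 : p < 1) (A : Finset (Fin n)) :
    Ex p n (fun σ => Ssum p n l A σ ^ 1) = 0 := by
  simp only [pow_one]; exact ExS_zero h0 h1 A

lemma ExS_sq (h0 : 0 < p) (h1 : p < 1) (A : Finset (Fin n)) :
    Ex p n (fun σ => Ssum p n l A σ ^ 2) = ∑ j ∈ A, l j ^ 2 := by
  classical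
  induction A using Finset.induction_on with
  | empty =>
    have h : (fun σ : Fin n → Bool => Ssum p n l ∅ σ ^ 2) = fun _ => (0:ℝ) := by
      funext σ; simp [Ssum]
    rw [h, Ex_const h0 h1, Finset.sum_empty]
  | @insert k A hk ih =>
    have hfe : (fun σ => Ssum p n l (insert k A) σ ^ 2) =
        fun σ => (l k)^2 * (xiVal p (σ k) ^ 2 * Ssum p n l A σ ^ 0)
          + (2 * l k) * (xiVal p (σ k) ^ 1 * Ssum p n l A σ ^ 1)
          + Ssum p n l A σ ^ 2 := by
      funext σ; simp only [Ssum, Finset.sum_insert hk]; ring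
    rw [hfe, Ex_add, Ex_add, Ex_cmul, Ex_cmul, Ex_xi_pow_mul hk 2 0,
      Ex_xi_pow_mul hk 1 1, Mo_one h0 h1, Mo_two h0 h1, Ex_pow_zero h0 h1,
      ExS_one_pow h0 h1 A, ih, Finset.sum_insert hk]
    ring

lemma ExS_four_ge (h0 : 0 < p) (h1 : p < 1) (A : Finset (Fin n)) :
    3 * (∑ j ∈ A, l j ^ 2) ^ 2 - 2 * (∑ j ∈ A, l j ^ 4)
      ≤ Ex p n (fun σ => Ssum p n l A σ ^ 4) := by
  classical
  induction A using Finset.induction_on with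
  | empty =>
    have h : (fun σ : Fin n → Bool => Ssum p n l ∅ σ ^ 4) = fun _ => (0:ℝ) := by
      funext σ; simp [Ssum]
    rw [h, Ex_const h0 h1]
    simp
  | @insert k A hk ih =>
    have hrec : Ex p n (fun σ => Ssum p n l (insert k A) σ ^ 4) =
        (l k)^4 * Mo p 4 + 6 * (l k)^2 * (∑ j ∈ A, l j ^ 2)
          + Ex p n (fun σ => Ssum p n l A σ ^ 4) := by
      have hfe : (fun σ => Ssum p n l (insert k A) σ ^ 4) =
          fun σ => (l k)^4 * (xiVal p (σ k) ^ 4 * Ssum p n l A σ ^ 0)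
            + (4 * (l k)^3) * (xiVal p (σ k) ^ 3 * Ssum p n l A σ ^ 1)
            + (6 * (l k)^2) * (xiVal p (σ k) ^ 2 * Ssum p n l A σ ^ 2)
            + (4 * l k) * (xiVal p (σ k) ^ 1 * Ssum p n l A σ ^ 3)
            + Ssum p n l A σ ^ 4 := by
        funext σ; simp only [Ssum, Finset.sum_insert hk]; ring
      rw [hfe, Ex_add, Ex_add, Ex_add, Ex_add, Ex_cmul, Ex_cmul, Ex_cmul, Ex_cmul,
        Ex_xi_pow_mul hk 4 0, Ex_xi_pow_mul hk 3 1, Ex_xi_pow_mul hk 2 2,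
        Ex_xi_pow_mul hk 1 3, Mo_one h0 h1, Mo_two h0 h1, Ex_pow_zero h0 h1,
        ExS_one_pow h0 h1 A, ExS_sq h0 h1 A]
      ring
    rw [hrec, Finset.sum_insert hk, Finset.sum_insert hk]
    have hm4 := Mo_four_ge_one h0 h1
    nlinarith [ih, mul_nonneg (sub_nonneg.mpr hm4) (sq_nonneg ((l k)^2))]

lemma ExS_six_pos (h0 : 0 < p) (h1 : p < 1) (A : Finset (Fin n)) :
    0 ≤ Ex p n (fun σ => Ssum p n l A σ ^ 6) :=
  Ex_nonneg h0 h1 fun σ => by positivity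

set_option maxHeartbeats 1000000 in
lemma ExS_six (h0 : 0 < p) (h1 : p < 1) (A : Finset (Fin n))
    (hA : (∑ j ∈ A, l j ^ 2) ≤ 1) :
    1 + Ex p n (fun σ => Ssum p n l A σ ^ 6)
      ≤ Real.exp (Cp p * ∑ j ∈ A, l j ^ 2) := by
  classical
  induction A using Finset.induction_on with
  | empty =>
    have h : (fun σ : Fin n → Bool => Ssum p n l ∅ σ ^ 6) = fun _ => (0:ℝ) := by
      funext σ; simp [Ssum]
    rw [h, Ex_const h0 h1, Finset.sum_empty]
    simp
  | @insert k A hk ih =>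
    have hsum_ins : ∑ j ∈ insert k A, l j ^ 2 = l k ^ 2 + ∑ j ∈ A, l j ^ 2 :=
      Finset.sum_insert hk
    have hv0 : 0 ≤ ∑ j ∈ A, l j ^ 2 := Finset.sum_nonneg fun j _ => sq_nonneg _
    have hA' : l k ^ 2 + ∑ j ∈ A, l j ^ 2 ≤ 1 := by rw [← hsum_ins]; exact hA
    have hlk2 : l k ^ 2 ≤ 1 := by linarith
    have hvA : ∑ j ∈ A, l j ^ 2 ≤ 1 := by nlinarith [sq_nonneg (l k)]
    have ihA := ih hvA
    set E6 := Ex p n (fun σ => Ssum p n l A σ ^ 6) with hE6def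
    set E4 := Ex p n (fun σ => Ssum p n l A σ ^ 4) with hE4def
    set E3 := Ex p n (fun σ => Ssum p n l A σ ^ 3) with hE3def
    have hE6nn : 0 ≤ E6 := ExS_six_pos h0 h1 A
    have hrec : Ex p n (fun σ => Ssum p n l (insert k A) σ ^ 6) =
        (l k)^6 * Mo p 6 + 15*(l k)^4 * (Mo p 4 * (∑ j ∈ A, l j ^ 2))
        + 20*(l k)^3 * (Mo p 3 * E3) + 15*(l k)^2 * E4 + E6 := by
      have hfe : (fun σ => Ssum p n l (insert k A) σ ^ 6) =
          fun σ => (l k)^6 * (xiVal p (σ k) ^ 6 * Ssum p n l A σ ^ 0)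
            + (6*(l k)^5) * (xiVal p (σ k) ^ 5 * Ssum p n l A σ ^ 1)
            + (15*(l k)^4) * (xiVal p (σ k) ^ 4 * Ssum p n l A σ ^ 2)
            + (20*(l k)^3) * (xiVal p (σ k) ^ 3 * Ssum p n l A σ ^ 3)
            + (15*(l k)^2) * (xiVal p (σ k) ^ 2 * Ssum p n l A σ ^ 4)
            + (6*(l k)) * (xiVal p (σ k) ^ 1 * Ssum p n l A σ ^ 5)
            + Ssum p n l A σ ^ 6 := by
        funext σ; simp only [Ssum, Finset.sum_insert hk]; ring
      rw [hfe, Ex_add, Ex_add, Ex_add, Ex_add, Ex_add, Ex_add,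
        Ex_cmul, Ex_cmul, Ex_cmul, Ex_cmul, Ex_cmul, Ex_cmul,
        Ex_xi_pow_mul hk 6 0, Ex_xi_pow_mul hk 5 1, Ex_xi_pow_mul hk 4 2,
        Ex_xi_pow_mul hk 3 3, Ex_xi_pow_mul hk 2 4, Ex_xi_pow_mul hk 1 5,
        Mo_one h0 h1, Mo_two h0 h1, Ex_pow_zero h0 h1, ExS_one_pow h0 h1 A,
        ExS_sq h0 h1 A]
      ring
    -- bound |E3|
    have hb3 : |E3| ≤ (1 + E6)/2 := by
      have h31 : |E3| ≤ Ex p n (fun σ => |Ssum p n l A σ ^ 3|) := by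
        rw [hE3def]; exact abs_Ex_le h0 h1 _
      have h32 : Ex p n (fun σ => |Ssum p n l A σ ^ 3|) ≤
          Ex p n (fun σ => 1/2 + (1/2) * Ssum p n l A σ ^ 6) := by
        apply Ex_mono h0 h1
        intro σ
        set x := Ssum p n l A σ
        nlinarith [sq_nonneg (|x ^ 3| - 1), sq_abs (x ^ 3), abs_nonneg (x ^ 3)]
      have h33 : Ex p n (fun σ => 1/2 + (1/2) * Ssum p n l A σ ^ 6) = 1/2 + (1/2) * E6 :=
        Ex_affine h0 h1 _ _ _
      rw [h33] at h32
      linarith [h31.trans h32]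
    -- bound E4
    have hb4 : E4 ≤ (1 + E6)/2 := by
      have h41 : E4 ≤ Ex p n (fun σ => (1/2) * Ssum p n l A σ ^ 2 + (1/2) * Ssum p n l A σ ^ 6) := by
        rw [hE4def]
        apply Ex_mono h0 h1
        intro σ
        set x := Ssum p n l A σ
        nlinarith [sq_nonneg (x ^ 3 - x)]
      rw [Ex_add, Ex_cmul, Ex_cmul, ExS_sq h0 h1 A] at h41
      rw [← hE6def] at h41
      linarith
    -- now the key step bound
    have h1E6 : (0:ℝ) ≤ 1 + E6 := by linarith
    have hl4 : (l k)^4 ≤ 1 := by nlinarith [sq_nonneg (l k)]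
    have hl6 : (l k)^6 ≤ (l k)^2 := by nlinarith [sq_nonneg (l k), sq_nonneg ((l k)^2), sq_nonneg ((l k)^3)]
    have hMo6 := Mo_six_nonneg h0 h1
    have hMo4 := Mo_four_nonneg h0 h1
    have t1 : (l k)^6 * Mo p 6 ≤ (l k)^2 * Mo p 6 * (1 + E6) := by
      have a1 : (l k)^6 * Mo p 6 ≤ (l k)^2 * Mo p 6 :=
        mul_le_mul_of_nonneg_right hl6 hMo6
      have a2 : (l k)^2 * Mo p 6 ≤ (l k)^2 * Mo p 6 * (1 + E6) :=
        le_mul_of_one_le_right (by positivity) (by linarith)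
      linarith
    have hl4' : (l k)^4 ≤ (l k)^2 := by nlinarith [sq_nonneg (l k)]
    have t2 : 15*(l k)^4 * (Mo p 4 * (∑ j ∈ A, l j ^ 2)) ≤ 15*((l k)^2 * Mo p 4 * (1 + E6)) := by
      have a0 : (l k)^4 * (Mo p 4 * (∑ j ∈ A, l j ^ 2)) ≤ (l k)^4 * (Mo p 4 * 1) :=
        mul_le_mul_of_nonneg_left (mul_le_mul_of_nonneg_left hvA hMo4) (by positivity)
      have a1 : (l k)^4 * Mo p 4 ≤ (l k)^2 * Mo p 4 :=
        mul_le_mul_of_nonneg_right hl4' hMo4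
      have a2 : (l k)^2 * Mo p 4 ≤ (l k)^2 * Mo p 4 * (1 + E6) :=
        le_mul_of_one_le_right (mul_nonneg (sq_nonneg _) hMo4) (by linarith)
      linarith
    have habs1 : |l k| ≤ 1 := by
      nlinarith [sq_abs (l k), abs_nonneg (l k)]
    have habs3 : |l k|^3 ≤ (l k)^2 := by
      nlinarith [sq_abs (l k), abs_nonneg (l k)]
    have t3 : 20*(l k)^3 * (Mo p 3 * E3) ≤ 10*((l k)^2 * |Mo p 3| * (1 + E6)) := by
      have s1 : (l k)^3 * (Mo p 3 * E3) ≤ |l k|^3 * |Mo p 3| * |E3| := by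
        calc (l k)^3 * (Mo p 3 * E3) ≤ |(l k)^3 * (Mo p 3 * E3)| := le_abs_self _
          _ = |l k|^3 * |Mo p 3| * |E3| := by rw [abs_mul, abs_mul, abs_pow]; ring
      have s2 : |l k|^3 * |Mo p 3| * |E3| ≤ (l k)^2 * |Mo p 3| * ((1 + E6)/2) := by
        apply mul_le_mul _ hb3 (abs_nonneg _) (by positivity)
        exact mul_le_mul_of_nonneg_right habs3 (abs_nonneg _)
      have := s1.trans s2
      linarith
    have t4 : 15*(l k)^2 * E4 ≤ 8*((l k)^2 * (1 + E6)) := by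
      have a1 : (l k)^2 * E4 ≤ (l k)^2 * ((1 + E6)/2) :=
        mul_le_mul_of_nonneg_left hb4 (sq_nonneg _)
      nlinarith [mul_nonneg (sq_nonneg (l k)) h1E6]
    have key : Ex p n (fun σ => Ssum p n l (insert k A) σ ^ 6)
        ≤ E6 + Cp p * (l k)^2 * (1 + E6) := by
      rw [hrec]
      have expand : Cp p * (l k)^2 * (1 + E6) =
          8*((l k)^2 * (1 + E6)) + 20*((l k)^2 * |Mo p 3| * (1 + E6))
          + 15*((l k)^2 * Mo p 4 * (1 + E6)) + (l k)^2 * Mo p 6 * (1 + E6) := by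
        unfold Cp; ring
      rw [expand]
      have slack : 0 ≤ (l k)^2 * |Mo p 3| * (1 + E6) := by positivity
      linarith
    have hCnn := Cp_nonneg h0 h1
    have step1 : 1 + Ex p n (fun σ => Ssum p n l (insert k A) σ ^ 6)
        ≤ (1 + E6) * (1 + Cp p * (l k)^2) := by nlinarith [key]
    have hexp1 : 1 + Cp p * (l k)^2 ≤ Real.exp (Cp p * (l k)^2) := by
      linarith [Real.add_one_le_exp (Cp p * (l k)^2)]
    have step2 : (1 + E6) * (1 + Cp p * (l k)^2)
        ≤ Real.exp (Cp p * ∑ j ∈ A, l j ^ 2) * Real.exp (Cp p * (l k)^2) := by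
      apply mul_le_mul ihA hexp1 (by positivity) (Real.exp_nonneg _)
    rw [hsum_ins]
    calc 1 + Ex p n (fun σ => Ssum p n l (insert k A) σ ^ 6)
        ≤ (1 + E6) * (1 + Cp p * (l k)^2) := step1
      _ ≤ Real.exp (Cp p * ∑ j ∈ A, l j ^ 2) * Real.exp (Cp p * (l k)^2) := step2
      _ = Real.exp (Cp p * (l k ^ 2 + ∑ j ∈ A, l j ^ 2)) := by
          rw [← Real.exp_add]; congr 1; ring

lemma ptwise_y (y : ℝ) (hy : 0 ≤ y) :
    (y + 1)^2 * (y^2 - 1)^2 ≤ 8 * (y^2)^3 + 8 := by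
  nlinarith [sq_nonneg (y^3 + y^2 - y - 1), sq_nonneg (y^3 - y^2 - y + 1), sq_nonneg (y^3 - 1),
    sq_nonneg (y-1), sq_nonneg (y+1), sq_nonneg (y^2-1), sq_nonneg (y^3 - y),
    mul_nonneg (mul_nonneg hy hy) hy, mul_nonneg hy (sq_nonneg (y^2 - 1)),
    mul_nonneg hy (sq_nonneg (y^2 - y)), mul_nonneg hy (sq_nonneg (y^2 + y - 1))]

lemma case2 (h0 : 0 < p) (h1 : p < 1) (hsum : ∑ j, l j ^ 2 = 1)
    {ε : ℝ} (hε0 : 0 < ε) (hmax : ∀ j, l j ^ 2 ≤ 1 - ε) :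
    Ex p n (fun σ => |Ssum p n l Finset.univ σ|) ≤ 1 - ε^2 / (4 * Real.exp (Cp p)) := by
  classical
  set S := fun σ => Ssum p n l Finset.univ σ with hSdef
  have hA2 : Ex p n (fun σ => S σ ^ 2) = 1 := by
    rw [hSdef]; rw [ExS_sq h0 h1]; exact hsum
  have hsum1 : (∑ j, l j ^ 2) ≤ 1 := le_of_eq hsum
  -- fourth powers
  have hquart : (∑ j, l j ^ 4) ≤ 1 - ε := by
    have h1' : ∀ j ∈ Finset.univ, l j ^ 4 ≤ (1 - ε) * l j ^ 2 := by
      intro j _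
      nlinarith [hmax j, sq_nonneg (l j)]
    calc (∑ j, l j ^ 4) ≤ ∑ j, (1 - ε) * l j ^ 2 := Finset.sum_le_sum h1'
      _ = (1 - ε) * ∑ j, l j ^ 2 := by rw [Finset.mul_sum]
      _ = 1 - ε := by rw [hsum, mul_one]
  have hA4 : 1 + 2*ε ≤ Ex p n (fun σ => S σ ^ 4) := by
    have := ExS_four_ge (l := l) h0 h1 Finset.univ
    rw [hsum] at this
    rw [hSdef]
    nlinarith [hquart]
  have hE6 : 1 + Ex p n (fun σ => S σ ^ 6) ≤ Real.exp (Cp p) := by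
    have := ExS_six (l := l) h0 h1 Finset.univ hsum1
    rw [hsum, mul_one] at this
    exact this
  set m1 := Ex p n (fun σ => |S σ|) with hm1
  -- E (|S|-1)^2 = 2 - 2 m1
  have hX2 : Ex p n (fun σ => (|S σ| - 1)^2) = 2 - 2*m1 := by
    have hpt : (fun σ => (|S σ| - 1)^2) =
        fun σ => (S σ ^ 2 + (-2) * |S σ|) + 1 := by
      funext σ
      rw [show (|S σ| - 1)^2 = |S σ|^2 - 2*|S σ| + 1 by ring, sq_abs]
      ring
    rw [hpt, Ex_add, Ex_add, Ex_cmul, Ex_const h0 h1, hA2, ← hm1]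
    ring
  have hX2nn : 0 ≤ 2 - 2*m1 := hX2 ▸ Ex_nonneg h0 h1 (fun σ => sq_nonneg _)
  -- E Y^2 ≤ 8 exp Cp
  have hY2 : Ex p n (fun σ => ((|S σ| + 1) * (S σ ^ 2 - 1))^2) ≤ 8 * Real.exp (Cp p) := by
    have step : Ex p n (fun σ => ((|S σ| + 1) * (S σ ^ 2 - 1))^2)
        ≤ Ex p n (fun σ => 8 + 8 * (S σ ^ 6)) := by
      apply Ex_mono h0 h1
      intro σ
      have hy := ptwise_y |S σ| (abs_nonneg _)
      rw [sq_abs] at hy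
      calc ((|S σ| + 1) * (S σ ^ 2 - 1))^2 = (|S σ| + 1)^2 * (S σ ^ 2 - 1)^2 := by ring
        _ ≤ 8 * (S σ ^ 2)^3 + 8 := hy
        _ = 8 + 8 * S σ ^ 6 := by ring
    rw [Ex_affine h0 h1] at step
    nlinarith [hE6]
  -- V = E (S^2-1)^2
  have hV : Ex p n (fun σ => (S σ ^ 2 - 1)^2) = Ex p n (fun σ => S σ ^ 4) - 1 := by
    have hpt : (fun σ => (S σ ^ 2 - 1)^2) = fun σ => (S σ ^ 4 + (-2) * S σ ^ 2) + 1 := by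
      funext σ; ring
    rw [hpt, Ex_add, Ex_add, Ex_cmul, Ex_const h0 h1, hA2]
    ring
  have hVge : 2*ε ≤ Ex p n (fun σ => (S σ ^ 2 - 1)^2) := by
    rw [hV]; linarith
  -- Cauchy-Schwarz
  have hCS := Ex_CS (p := p) (n := n) h0 h1 (fun σ => |S σ| - 1)
    (fun σ => (|S σ| + 1) * (S σ ^ 2 - 1))
  have hXY : (fun σ => (|S σ| - 1) * ((|S σ| + 1) * (S σ ^ 2 - 1))) =
      fun σ => (S σ ^ 2 - 1)^2 := by
    funext σ
    rw [show (|S σ| - 1) * ((|S σ| + 1) * (S σ ^ 2 - 1)) = (|S σ|^2 - 1) * (S σ ^ 2 - 1) by ring,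
      sq_abs]
    ring
  rw [hXY, hX2] at hCS
  have hfinal : (2*ε)^2 ≤ (2 - 2*m1) * (8 * Real.exp (Cp p)) := by
    have hV2 : (2*ε)^2 ≤ (Ex p n (fun σ => (S σ ^ 2 - 1)^2))^2 := by
      nlinarith [hVge, hε0]
    have hY2nn : 0 ≤ Ex p n (fun σ => ((|S σ| + 1) * (S σ ^ 2 - 1))^2) :=
      Ex_nonneg h0 h1 (fun σ => sq_nonneg _)
    nlinarith [hCS, hV2, hY2, hX2nn, hY2nn]
  have hEpos : (0:ℝ) < Real.exp (Cp p) := Real.exp_pos _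
  have hdiv : ε^2/(4*Real.exp (Cp p)) ≤ 1 - m1 := by
    rw [div_le_iff₀ (by positivity)]
    nlinarith [hfinal]
  linarith

set_option maxHeartbeats 1000000 in

set_option maxHeartbeats 1000000 in
lemma majorant (h2 : 1/2 < p) (h1 : p < 1) {L : ℝ} (hL : 0 < L) (r : ℝ) :
    p * |L * Real.sqrt ((1-p)/p) + r| + (1-p) * |L * (-Real.sqrt (p/(1-p))) + r|
      ≤ 2*(Real.sqrt (p*(1-p))*L) + (2*p-1)*r
        + (p^2/(2*(Real.sqrt (p*(1-p))*L)))*r^2 := by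
  have h0 : 0 < p := by linarith
  have h1p : (0:ℝ) < 1 - p := by linarith
  set s := Real.sqrt (p*(1-p)) with hsdef
  set a := Real.sqrt ((1-p)/p) with hadef
  set b := Real.sqrt (p/(1-p)) with hbdef
  have hs0 : 0 < s := Real.sqrt_pos.mpr (by positivity)
  have hsa : s * a = 1 - p := by
    rw [hsdef, hadef, ← Real.sqrt_mul (by positivity)]
    rw [show p*(1-p)*((1-p)/p) = (1-p)^2 by field_simp]
    exact Real.sqrt_sq h1p.le
  have hsb : s * b = p := by
    rw [hsdef, hbdef, ← Real.sqrt_mul (by positivity)]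
    rw [show p*(1-p)*(p/(1-p)) = p^2 by field_simp]
    exact Real.sqrt_sq h0.le
  have hz0 : 0 < s * L := mul_pos hs0 hL
  have h2z : (0:ℝ) < 2*(s*L) := by linarith
  rw [← mul_le_mul_iff_right₀ h2z]
  have hRHS : 2*(s*L) * (2*(s*L) + (2*p-1)*r + (p^2/(2*(s*L)))*r^2)
      = 4*(s*L)^2 + 2*(s*L)*((2*p-1)*r) + p^2*r^2 := by
    field_simp
    ring
  rw [hRHS]
  have hzLa : (s*L) * (L * a) = (1-p)*L^2 := by
    rw [show (s*L) * (L*a) = (s*a)*L^2 by ring, hsa]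
  have hzLb : (s*L) * (L * b) = p*L^2 := by
    rw [show (s*L) * (L*b) = (s*b)*L^2 by ring, hsb]
  have hp21 : (0:ℝ) < 2*p - 1 := by linarith
  have hz2 : (s*L)^2 = p*(1-p)*L^2 := by
    rw [mul_pow, hsdef, Real.sq_sqrt (by positivity : (0:ℝ) ≤ p*(1-p))]
  rcases abs_cases (L * a + r) with ⟨he1, _⟩ | ⟨he1, _⟩ <;>
    rcases abs_cases (L * (-b) + r) with ⟨he2, _⟩ | ⟨he2, _⟩ <;>
      rw [he1, he2] <;>
  nlinarith [hzLa, hzLb, hz2, sq_nonneg (2*(s*L) - (1-p)*r), sq_nonneg (p*r + 2*(s*L)),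
    sq_nonneg (2*(s*L) + (2*p-1)*r), mul_pos hz0 hz0,
    mul_nonneg (by nlinarith : (0:ℝ) ≤ p^2 - (1-p)^2) (sq_nonneg r),
    mul_nonneg (by nlinarith : (0:ℝ) ≤ p^2 - (2*p-1)^2) (sq_nonneg r),
    sq_nonneg r, sq_nonneg (p*r)]


set_option maxHeartbeats 1000000 in
lemma case1 (h2 : 1/2 < p) (h1 : p < 1) (hsum : ∑ j, l j ^ 2 = 1) (j₀ : Fin n)
    {ε : ℝ} (hε0 : 0 < ε) (hε4 : ε ≤ 1/4) (hLhyp : 1 - ε ≤ l j₀ ^ 2) :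
    Ex p n (fun σ => |Ssum p n l Finset.univ σ|)
      ≤ 2*Real.sqrt (p*(1-p)) + ε/Real.sqrt (p*(1-p)) := by
  classical
  have h0 : 0 < p := by linarith
  have h1p : (0:ℝ) < 1 - p := by linarith
  set s := Real.sqrt (p*(1-p)) with hsdef
  have hs0 : 0 < s := Real.sqrt_pos.mpr (by positivity)
  set L := |l j₀| with hLdef
  have hL2 : L^2 = l j₀^2 := sq_abs _
  have hLle1sq : l j₀ ^ 2 ≤ 1 := by
    have h := Finset.single_le_sum (f := fun j => l j ^ 2)
      (fun j _ => sq_nonneg (l j)) (Finset.mem_univ j₀)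
    rw [hsum] at h; exact h
  have hLnn : 0 ≤ L := abs_nonneg _
  have hLhalf : 1/2 ≤ L := by nlinarith
  have hLpos : 0 < L := by linarith
  have hLle1 : L ≤ 1 := by nlinarith
  set R := fun σ : Fin n → Bool => Ssum p n l (Finset.univ.erase j₀) σ with hRdef
  have hRinv : ∀ σ b, R (Function.update σ j₀ b) = R σ := fun σ b =>
    Ssum_update (Finset.notMem_erase j₀ _) σ b
  have hdecomp : ∀ σ, Ssum p n l Finset.univ σ = l j₀ * xiVal p (σ j₀) + R σ := by
    intro σ
    rw [hRdef]
    exact (Finset.add_sum_erase _ _ (Finset.mem_univ j₀)).symm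
  have hER : Ex p n R = 0 := ExS_zero h0 h1 _
  have hER2 : Ex p n (fun σ => R σ ^ 2) = 1 - l j₀ ^ 2 := by
    have e := ExS_sq (l := l) h0 h1 (Finset.univ.erase j₀)
    have e2 : (∑ j ∈ Finset.univ.erase j₀, l j ^ 2) + l j₀ ^ 2 = 1 := by
      rw [Finset.sum_erase_add _ _ (Finset.mem_univ j₀)]; exact hsum
    rw [hRdef]
    rw [e]
    linarith
  set Gt := fun σ : Fin n → Bool => |l j₀ * xiVal p true + R σ| with hGt
  set Gf := fun σ : Fin n → Bool => |l j₀ * xiVal p false + R σ| with hGf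
  have hsplit : Ex p n (fun σ => |Ssum p n l Finset.univ σ|)
      = p * Ex p n Gt + (1-p) * Ex p n Gf := by
    have e1 := Ex_split (p := p) j₀ (fun b => if b then (1:ℝ) else 0) Gt
      (fun σ b => by rw [hGt]; simp only; rw [hRinv])
    have e2 := Ex_split (p := p) j₀ (fun b => if b then (0:ℝ) else 1) Gf
      (fun σ b => by rw [hGf]; simp only; rw [hRinv])
    have hpt : (fun σ => |Ssum p n l Finset.univ σ|) =
        fun σ => (if σ j₀ then (1:ℝ) else 0) * Gt σ + (if σ j₀ then (0:ℝ) else 1) * Gf σ := by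
      funext σ
      rw [hdecomp σ]
      cases h : σ j₀ <;> simp [hGt, hGf, h]
    rw [hpt, Ex_add, e1, e2]
    simp [wt]
  set γ := p^2/(2*(s*L)) with hγ
  -- pointwise majorant, sign cases
  have hkey : ∃ c : ℝ, (∀ σ, p * Gt σ + (1-p) * Gf σ
      ≤ 2*(s*L) + (c * R σ + γ * (R σ)^2)) := by
    rcases le_or_gt 0 (l j₀) with hsign | hsign
    · refine ⟨2*p-1, fun σ => ?_⟩
      have hlj : l j₀ = L := (abs_of_nonneg hsign).symm
      have hm := majorant h2 h1 hLpos (R σ)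
      rw [hGt, hGf]
      simp only
      rw [hlj]
      show p * |L * xiVal p true + R σ| + (1-p) * |L * xiVal p false + R σ| ≤ _
      have hxt : xiVal p true = Real.sqrt ((1-p)/p) := rfl
      have hxf : xiVal p false = -Real.sqrt (p/(1-p)) := rfl
      rw [hxt, hxf]
      calc p * |L * Real.sqrt ((1-p)/p) + R σ| + (1-p) * |L * -Real.sqrt (p/(1-p)) + R σ|
          ≤ 2*(s*L) + (2*p-1)*(R σ) + γ*(R σ)^2 := hm
        _ = 2*(s*L) + ((2*p-1) * R σ + γ * (R σ)^2) := by ring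
    · refine ⟨-(2*p-1), fun σ => ?_⟩
      have hlj : l j₀ = -L := by rw [hLdef, abs_of_neg hsign]; ring
      have hm := majorant h2 h1 hLpos (-R σ)
      rw [hGt, hGf]
      simp only
      rw [hlj]
      have hxt : xiVal p true = Real.sqrt ((1-p)/p) := rfl
      have hxf : xiVal p false = -Real.sqrt (p/(1-p)) := rfl
      rw [hxt, hxf]
      have ht : -L * Real.sqrt ((1-p)/p) + R σ
          = -(L * Real.sqrt ((1-p)/p) + -R σ) := by ring
      have hf : -L * -Real.sqrt (p/(1-p)) + R σ
          = -(L * -Real.sqrt (p/(1-p)) + -R σ) := by ring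
      rw [ht, hf, abs_neg, abs_neg]
      calc p * |L * Real.sqrt ((1-p)/p) + -R σ| + (1-p) * |L * -Real.sqrt (p/(1-p)) + -R σ|
          ≤ 2*(s*L) + (2*p-1)*(-R σ) + γ*(-R σ)^2 := hm
        _ = 2*(s*L) + (-(2*p-1) * R σ + γ * (R σ)^2) := by ring
  obtain ⟨c, hc⟩ := hkey
  have hbound : Ex p n (fun σ => |Ssum p n l Finset.univ σ|)
      ≤ 2*(s*L) + γ*(1 - l j₀^2) := by
    rw [hsplit]
    have e3 : p * Ex p n Gt + (1-p) * Ex p n Gf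
        = Ex p n (fun σ => p * Gt σ + (1-p) * Gf σ) := by
      rw [Ex_add, Ex_cmul, Ex_cmul]
    rw [e3]
    have e4 : Ex p n (fun σ => 2*(s*L) + (c * R σ + γ * (R σ)^2))
        = 2*(s*L) + γ*(1 - l j₀^2) := by
      rw [Ex_add, Ex_const h0 h1, Ex_add, Ex_cmul, Ex_cmul, hER, hER2]
      ring
    rw [← e4]
    exact Ex_mono h0 h1 hc
  -- final arithmetic
  have h1L2 : 1 - l j₀^2 ≤ ε := by linarith
  have h1L2nn : 0 ≤ 1 - l j₀^2 := by linarith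
  have t1 : 2*(s*L) ≤ 2*s := by nlinarith
  have t2 : γ*(1 - l j₀^2) ≤ ε/s := by
    rw [hγ, div_mul_eq_mul_div, div_le_div_iff₀ (by positivity) hs0]
    have hpp : p^2 ≤ 1 := by nlinarith
    have hp2 : p^2*(1 - l j₀^2) ≤ ε := by
      nlinarith [mul_nonneg (by linarith : (0:ℝ) ≤ 1 - p^2) h1L2nn]
    nlinarith [mul_le_mul_of_nonneg_right hp2 hs0.le,
      mul_nonneg (mul_nonneg hs0.le hε0.le) (by linarith : (0:ℝ) ≤ 2*L - 1)]
  linarith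

end KD

/-- For every `p ∈ (1/2, 1)` there exists `q(p) < 1` such that for every `n ≥ 1` and
every unit vector `λ ∈ ℝ^n` one has `𝔼|∑ λ_j ξ_j| ≤ q(p)`: the deficit in the
Khinchine-type `L¹`–`L²` comparison is uniform in `n` and in `λ`. -/
theorem khinchine_deficit_uniform :
    ∀ p ∈ Set.Ioo (1 / 2 : ℝ) 1, ∃ q < (1 : ℝ),
      ∀ n : ℕ, 1 ≤ n → ∀ l : Fin n → ℝ, (∑ j, (l j) ^ 2) = 1 →
        expAbsSum p n l ≤ q := by
  intro p hp
  obtain ⟨hp1, hp2⟩ := hp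
  have h0 : 0 < p := by linarith
  have h1p : (0:ℝ) < 1 - p := by linarith
  set s := Real.sqrt (p*(1-p)) with hsdef
  have hs0 : 0 < s := Real.sqrt_pos.mpr (by positivity)
  have hs2 : s^2 = p*(1-p) := Real.sq_sqrt (by positivity)
  have hp21 : (0:ℝ) < (2*p-1)^2 := by
    have h21 : (0:ℝ) < 2*p-1 := by linarith
    positivity
  have hs12 : s < 1/2 := by nlinarith
  set ε := min (1/4 : ℝ) (s*(1-2*s)/2) with hε
  have hε0 : 0 < ε := lt_min (by norm_num) (by nlinarith)
  have hε4 : ε ≤ 1/4 := min_le_left _ _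
  have hε2 : ε ≤ s*(1-2*s)/2 := min_le_right _ _
  have hEpos : (0:ℝ) < Real.exp (KD.Cp p) := Real.exp_pos _
  refine ⟨max ((1+2*s)/2) (1 - ε^2/(4*Real.exp (KD.Cp p))), ?_, ?_⟩
  · apply max_lt
    · linarith
    · have hq : 0 < ε^2/(4*Real.exp (KD.Cp p)) := by positivity
      linarith
  · intro n _hn l hl
    have heq : expAbsSum p n l = KD.Ex p n (fun σ => |KD.Ssum p n l Finset.univ σ|) := rfl
    rw [heq]
    by_cases hcase : ∃ j, 1 - ε ≤ l j ^ 2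
    · obtain ⟨j₀, hj₀⟩ := hcase
      refine le_trans (KD.case1 hp1 hp2 hl j₀ hε0 hε4 hj₀)
        (le_trans ?_ (le_max_left _ _))
      have hdd : ε/s ≤ (1-2*s)/2 := by
        rw [div_le_iff₀ hs0]
        nlinarith
      linarith
    · push_neg at hcase
      exact le_trans (KD.case2 h0 hp2 hl hε0 (fun j => (hcase j).le)) (le_max_right _ _)
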